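/- Let v ∈ [0,1)^𝑁, u ∈ [0,1], and let y : [0,∞) → [0,1] be a differentiable function with y(0) = u and y'(t) = B_𝑁(y(t), v) + B̄_𝑁(y(t)) for all t ≥ 0. If u < ρ(v), then y is monotone increasing on [0,∞) and y(t) → ρ(v) as t → ∞; if u > ρ(v), then y is monotone decreasing on [0,∞) and y(t) → ρ(v) as t → ∞; if u = ρ(v), then y(t) = ρ(v) for every t ≥ 0. -/

import Mathlib

open Set Filter

lemma stmt7_no_upcross (y G : ℝ → ℝ) (ρ t₁ : ℝ) (ht₁ : 0 ≤ t₁)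
    (hcont : ContinuousOn y (Set.Icc 0 t₁))
    (hderiv : ∀ x, 0 < x → x < t₁ → HasDerivAt y (G x) x)
    (hsign : ∀ x, 0 < x → x < t₁ → ρ < y x → G x ≤ 0)
    (h0 : y 0 ≤ ρ) : y t₁ ≤ ρ := by
  by_contra h
  push_neg at h
  set T : Set ℝ := Set.Icc 0 t₁ ∩ y ⁻¹' {ρ} with hT
  have hTclosed : IsClosed T := hcont.preimage_isClosed_of_isClosed isClosed_Icc isClosed_singleton
  have hTsub : T ⊆ Set.Icc 0 t₁ := Set.inter_subset_left
  have hTne : T.Nonempty := by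
    rcases eq_or_lt_of_le h0 with h0' | h0'
    · exact ⟨0, ⟨le_refl 0, ht₁⟩, show y 0 ∈ ({ρ} : Set ℝ) from h0' ▸ rfl⟩
    · rcases intermediate_value_Icc ht₁ hcont ⟨h0'.le, h.le⟩ with ⟨s, hs, hys⟩
      exact ⟨s, hs, show y s ∈ ({ρ} : Set ℝ) from hys ▸ rfl⟩
  have hTcomp : IsCompact T := isCompact_Icc.of_isClosed_subset hTclosed hTsub
  set t₀ := sSup T with ht₀def
  have ht₀T : t₀ ∈ T := hTcomp.sSup_mem hTne
  have ht₀mem : t₀ ∈ Set.Icc 0 t₁ := hTsub ht₀T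
  have hyt₀ : y t₀ = ρ := ht₀T.2
  have ht₀lt : t₀ < t₁ := by
    rcases eq_or_lt_of_le ht₀mem.2 with he | hl
    · exfalso; rw [he] at hyt₀; exact h.ne' hyt₀
    · exact hl
  -- on (t₀, t₁], y > ρ
  have hbig : ∀ s, t₀ < s → s ≤ t₁ → ρ < y s := by
    intro s hs hs1
    by_contra hys
    push_neg at hys
    have hsmem : s ∈ Set.Icc 0 t₁ := ⟨le_trans ht₀mem.1 hs.le, hs1⟩
    rcases intermediate_value_Icc hs1 (hcont.mono (Set.Icc_subset_Icc hsmem.1 le_rfl))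
        ⟨hys, h.le⟩ with ⟨r, hr, hyr⟩
    have hrT : r ∈ T := ⟨⟨le_trans hsmem.1 hr.1, hr.2⟩, show y r ∈ ({ρ} : Set ℝ) from hyr ▸ rfl⟩
    have : r ≤ t₀ := le_csSup (hTcomp.bddAbove) hrT
    exact absurd (lt_of_lt_of_le hs hr.1) (not_lt.2 this)
  -- y antitone on [t₀, t₁]
  have hanti : AntitoneOn y (Set.Icc t₀ t₁) := by
    apply antitoneOn_of_deriv_nonpos (convex_Icc _ _)
        (hcont.mono (Set.Icc_subset_Icc ht₀mem.1 le_rfl))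
    · intro x hx
      rw [interior_Icc] at hx
      exact ((hderiv x (lt_of_le_of_lt ht₀mem.1 hx.1) hx.2).differentiableAt).differentiableWithinAt
    · intro x hx
      rw [interior_Icc] at hx
      have hd := hderiv x (lt_of_le_of_lt ht₀mem.1 hx.1) hx.2
      rw [hd.deriv]
      exact hsign x (lt_of_le_of_lt ht₀mem.1 hx.1) hx.2 (hbig x hx.1 hx.2.le)
  have := hanti (Set.left_mem_Icc.2 ht₀lt.le) (Set.right_mem_Icc.2 ht₀lt.le) ht₀lt.le
  rw [hyt₀] at this
  exact absurd h (not_lt.2 this)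

lemma stmt7_escape (z G : ℝ → ℝ) (M ε t₂ : ℝ) (hε : 0 < ε)
    (hcont : ContinuousOn z (Set.Ici t₂))
    (hderiv : ∀ x, t₂ < x → HasDerivAt z (G x) x)
    (hG : ∀ t, t₂ ≤ t → ε ≤ G t)
    (hbd : ∀ t, t₂ ≤ t → z t ≤ M) : False := by
  have hmono : MonotoneOn (fun t => z t - ε * t) (Set.Ici t₂) := by
    apply monotoneOn_of_deriv_nonneg (convex_Ici _)
        (hcont.sub ((continuous_mul_left ε).continuousOn))
    · intro x hx
      rw [interior_Ici] at hx
      exact (((hderiv x hx).sub ((hasDerivAt_id x).const_mul ε)).differentiableAt).differentiableWithinAt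
    · intro x hx
      rw [interior_Ici] at hx
      have hd : HasDerivAt (fun t => z t - ε * t) (G x - ε) x := by
        have h := (hderiv x hx).sub ((hasDerivAt_id x).const_mul ε)
        simp only [mul_one] at h
        exact h
      change 0 ≤ deriv (fun t => z t - ε * t) x
      rw [hd.deriv]
      exact sub_nonneg.2 (hG x hx.le)
  have hzt₂ : z t₂ ≤ M := hbd t₂ le_rfl
  have hq : 0 ≤ (M - z t₂ + 1) / ε := div_nonneg (by linarith) hε.le
  have htge : t₂ ≤ t₂ + (M - z t₂ + 1) / ε := by linarith
  have h2 := hmono (Set.self_mem_Ici) htge htge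
  simp only at h2
  have h3 : z (t₂ + (M - z t₂ + 1) / ε) ≥ z t₂ + ε * ((M - z t₂ + 1) / ε) := by linarith
  rw [mul_div_cancel₀ _ hε.ne'] at h3
  have h4 := hbd (t₂ + (M - z t₂ + 1) / ε) htge
  linarith



/-- Let `v ∈ [0,1)^N`, `u ∈ [0,1]`, and `y : [0,∞) → [0,1]` differentiable
with `y(0) = u` and `y'(t) = B_N(y(t),v) + B̄_N(y(t))` for `t ≥ 0`. If `u < ρ(v)` then `y`
is monotone increasing on `[0,∞)` and `y(t) → ρ(v)`; if `u > ρ(v)` then `y` is monotone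
decreasing on `[0,∞)` and `y(t) → ρ(v)`; if `u = ρ(v)` then `y(t) = ρ(v)` for all `t ≥ 0`. -/
theorem stmt_7
    (b : ℕ → ℝ)
    (hb_nonneg : ∀ j : ℕ, j ≠ 1 → 0 ≤ b j)
    (hb1 : b 1 < 0)
    (hb_sum : HasSum (fun j : ℕ => if j = 1 then 0 else b j) (-(b 1)))
    (N : Finset ℕ) (hN : N.Nonempty) (h1N : (1 : ℕ) ∉ N)
    (hbN : ∀ k ∈ N, 0 < b k)
    (v : ℕ → ℝ) (hv : ∀ j ∈ N, v j ∈ Set.Ico (0 : ℝ) 1)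
    (u : ℝ) (hu : u ∈ Set.Icc (0 : ℝ) 1)
    (ρv : ℝ)
    (hρv : IsLeast {w : ℝ | w ∈ Set.Icc (0 : ℝ) 1 ∧
        (∑' j : ℕ, if j ∈ N then 0 else b j * w ^ j)
          + (∑ j ∈ N, b j * v j * w ^ j) = 0} ρv)
    (y : ℝ → ℝ)
    (hy0 : y 0 = u)
    (hymem : ∀ t : ℝ, 0 ≤ t → y t ∈ Set.Icc (0 : ℝ) 1)
    (hyderiv : ∀ t : ℝ, 0 ≤ t →
      HasDerivWithinAt y
        ((∑ j ∈ N, b j * v j * (y t) ^ j)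
          + (∑' j : ℕ, if j ∈ N then 0 else b j * (y t) ^ j))
        (Set.Ici (0 : ℝ)) t) :
    (u < ρv → MonotoneOn y (Set.Ici (0 : ℝ)) ∧
      Filter.Tendsto y Filter.atTop (nhds ρv)) ∧
    (ρv < u → AntitoneOn y (Set.Ici (0 : ℝ)) ∧
      Filter.Tendsto y Filter.atTop (nhds ρv)) ∧
    (u = ρv → ∀ t : ℝ, 0 ≤ t → y t = ρv) := by
  classical
  set c : ℕ → ℝ := fun j => if j ∈ N then b j * v j else b j with hc
  set F : ℝ → ℝ := fun w => ∑' j, c j * w ^ j with hFdef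
  -- summability of b
  have hbS : HasSum b 0 := by
    have h2 : HasSum (fun j : ℕ => if j = 1 then b 1 else 0) (b 1) := hasSum_ite_eq 1 (b 1)
    have h3 := hb_sum.add h2
    simp only [neg_add_cancel] at h3
    convert h3 using 2 with j
    by_cases hj : j = 1 <;> simp [hj]
  have habs : Summable (fun j => |b j|) := summable_abs_iff.2 hbS.summable
  have hcabs : ∀ j, |c j| ≤ |b j| := by
    intro j
    by_cases hj : j ∈ N
    · have hb := (hbN j hj).le
      have hv' := hv j hj
      simp only [hc, if_pos hj, abs_mul]
      calc |b j| * |v j| ≤ |b j| * 1 := by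
            apply mul_le_mul_of_nonneg_left _ (abs_nonneg _)
            rw [abs_le]; constructor <;> linarith [hv'.1, hv'.2]
        _ = |b j| := mul_one _
    · simp [hc, if_neg hj]
  have hsum_w : ∀ w : ℝ, |w| ≤ 1 → Summable (fun j => c j * w ^ j) := by
    intro w hw
    apply Summable.of_norm_bounded habs
    intro j
    rw [norm_mul, norm_pow]
    calc ‖c j‖ * ‖w‖ ^ j ≤ |b j| * 1 ^ j := by
          apply mul_le_mul (hcabs j) (pow_le_pow_left₀ (norm_nonneg _) hw j)
            (pow_nonneg (norm_nonneg _) j) (abs_nonneg _)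
      _ = |b j| := by simp
  have hc_nonneg : ∀ j, j ≠ 1 → 0 ≤ c j := by
    intro j hj
    by_cases hjn : j ∈ N
    · simp only [hc, if_pos hjn]
      exact mul_nonneg (hbN j hjn).le (hv j hjn).1
    · simp only [hc, if_neg hjn]; exact hb_nonneg j hj
  -- F_eq
  have hF_eq : ∀ w : ℝ, |w| ≤ 1 →
      (∑' j : ℕ, if j ∈ N then 0 else b j * w ^ j) + (∑ j ∈ N, b j * v j * w ^ j) = F w := by
    intro w hw
    have h1 : Summable (fun j : ℕ => if j ∈ N then 0 else b j * w ^ j) := by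
      apply Summable.of_norm_bounded habs
      intro j
      by_cases hj : j ∈ N
      · simp [hj, abs_nonneg]
      · simp only [if_neg hj, norm_mul, norm_pow]
        calc ‖b j‖ * ‖w‖ ^ j ≤ |b j| * 1 ^ j := by
              apply mul_le_mul le_rfl (pow_le_pow_left₀ (norm_nonneg _) hw j)
                (pow_nonneg (norm_nonneg _) j) (abs_nonneg _)
          _ = |b j| := by simp
    have h2 : Summable (fun j : ℕ => if j ∈ N then b j * v j * w ^ j else 0) :=
      summable_of_ne_finset_zero (s := N) (fun j hj => if_neg hj)
    have h2t : (∑' j : ℕ, if j ∈ N then b j * v j * w ^ j else 0)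
        = ∑ j ∈ N, b j * v j * w ^ j := by
      rw [tsum_eq_sum (s := N) (fun j hj => if_neg hj)]
      exact Finset.sum_congr rfl (fun j hj => if_pos hj)
    have : F w = (∑' j : ℕ, if j ∈ N then 0 else b j * w ^ j)
        + (∑' j : ℕ, if j ∈ N then b j * v j * w ^ j else 0) := by
      rw [← Summable.tsum_add h1 h2]
      apply tsum_congr
      intro j
      by_cases hj : j ∈ N <;> simp [hc, hj]
    rw [this, h2t]
  -- continuity
  have hFcont : ContinuousOn F (Set.Icc (-1 : ℝ) 1) := by
    apply continuousOn_tsum (u := fun j => |b j|) _ habs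
    · intro j w hw
      rw [norm_mul, norm_pow]
      have hw1 : ‖w‖ ≤ 1 := abs_le.2 ⟨hw.1, hw.2⟩
      calc ‖c j‖ * ‖w‖ ^ j ≤ |b j| * 1 ^ j := by
            apply mul_le_mul (hcabs j) (pow_le_pow_left₀ (norm_nonneg _) hw1 j)
              (pow_nonneg (norm_nonneg _) j) (abs_nonneg _)
        _ = |b j| := by simp
    · exact fun j => (continuous_const.mul (continuous_pow j)).continuousOn
  -- convexity
  have hFconv : ConvexOn ℝ (Set.Icc (0:ℝ) 1) F := by
    refine ⟨convex_Icc _ _, ?_⟩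
    intro x hx y hy a b' ha hb' hab
    have hxy : a • x + b' • y ∈ Set.Icc (0:ℝ) 1 := (convex_Icc (0:ℝ) 1) hx hy ha hb' hab
    have habs1 : ∀ w : ℝ, w ∈ Set.Icc (0:ℝ) 1 → |w| ≤ 1 := fun w hw => abs_le.2 ⟨by linarith [hw.1], hw.2⟩
    have hsx := hsum_w x (habs1 x hx)
    have hsy := hsum_w y (habs1 y hy)
    simp only [smul_eq_mul]
    have hrhs : a * F x + b' * F y = ∑' j, (a * (c j * x ^ j) + b' * (c j * y ^ j)) := by
      rw [Summable.tsum_add (hsx.mul_left a) (hsy.mul_left b'), tsum_mul_left, tsum_mul_left]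
    rw [hrhs]
    apply Summable.tsum_le_tsum _ (hsum_w _ (habs1 _ hxy)) ((hsx.mul_left a).add (hsy.mul_left b'))
    intro j
    by_cases hj : j = 1
    · subst hj
      simp only [pow_one, smul_eq_mul]
      apply le_of_eq
      ring
    · have hcj := hc_nonneg j hj
      have hpow : (a * x + b' * y) ^ j ≤ a * x ^ j + b' * y ^ j := by
        have := (convexOn_pow j).2 (Set.mem_Ici.2 hx.1) (Set.mem_Ici.2 hy.1) ha hb' hab
        simpa [smul_eq_mul] using this
      calc c j * (a * x + b' * y) ^ j ≤ c j * (a * x ^ j + b' * y ^ j) :=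
            mul_le_mul_of_nonneg_left hpow hcj
        _ = a * (c j * x ^ j) + b' * (c j * y ^ j) := by ring
  -- F 1 < 0
  have hF1 : F 1 < 0 := by
    have hd : HasSum (fun j : ℕ => if j ∈ N then b j * (v j - 1) else 0)
        (∑ j ∈ N, b j * (v j - 1)) := by
      have : HasSum (fun j : ℕ => if j ∈ N then b j * (v j - 1) else 0)
          (∑ j ∈ N, (if j ∈ N then b j * (v j - 1) else 0)) := hasSum_sum_of_ne_finset_zero (s := N)
        (f := fun j : ℕ => if j ∈ N then b j * (v j - 1) else 0) (fun j hj => if_neg hj)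
      rwa [Finset.sum_congr rfl (fun j hj => if_pos hj)] at this
    have hcsum : HasSum c (0 + ∑ j ∈ N, b j * (v j - 1)) := by
      have := hbS.add hd
      convert this using 2 with j
      by_cases hj : j ∈ N <;> simp [hc, hj] <;> ring
    have hneg : (∑ j ∈ N, b j * (v j - 1)) < 0 := by
      apply Finset.sum_neg _ hN
      intro j hj
      have := (hv j hj).2
      have := hbN j hj
      nlinarith
    have : F 1 = ∑' j, c j := by simp [hFdef]
    rw [this, hcsum.tsum_eq]
    linarith
  -- facts about ρv
  have hρmem : ρv ∈ Set.Icc (0:ℝ) 1 := hρv.1.1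
  have hρabs : |ρv| ≤ 1 := abs_le.2 ⟨by linarith [hρmem.1], hρmem.2⟩
  have hFρ : F ρv = 0 := by rw [← hF_eq ρv hρabs]; exact hρv.1.2
  have hroot_ge : ∀ w, w ∈ Set.Icc (0:ℝ) 1 → F w = 0 → ρv ≤ w := by
    intro w hw hFw
    exact hρv.2 ⟨hw, by rw [hF_eq w (abs_le.2 ⟨by linarith [hw.1], hw.2⟩)]; exact hFw⟩
  have hFcont' : ContinuousOn F (Set.Icc (0:ℝ) 1) :=
    hFcont.mono (Set.Icc_subset_Icc (by norm_num) le_rfl)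
  have hF0 : 0 ≤ F 0 := by
    have h00 : F 0 = c 0 := by
      rw [hFdef]
      simp only
      rw [tsum_eq_single 0 (fun j hj => by simp [zero_pow hj])]
      simp
    rw [h00]
    exact hc_nonneg 0 (by norm_num)
  have hFpos : ∀ w, 0 ≤ w → w < ρv → 0 < F w := by
    intro w hw0 hwρ
    have hw1 : w ≤ 1 := le_trans hwρ.le hρmem.2
    by_contra hFw
    push_neg at hFw
    have hFwne : F w ≠ 0 := fun h0 => absurd (hroot_ge w ⟨hw0, hw1⟩ h0) (not_le.2 hwρ)
    have hFwneg : F w < 0 := lt_of_le_of_ne hFw hFwne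
    rcases intermediate_value_Icc' hw0 (hFcont'.mono (Set.Icc_subset_Icc le_rfl hw1))
        ⟨hFwneg.le, hF0⟩ with ⟨z, hz, hFz⟩
    have := hroot_ge z ⟨hz.1, le_trans hz.2 hw1⟩ hFz
    linarith [hz.2]
  have hFneg : ∀ w, ρv < w → w ≤ 1 → F w < 0 := by
    intro w hρw hw1
    have hρ1 : ρv < 1 := lt_of_lt_of_le hρw hw1
    have h1ρ : 0 < 1 - ρv := by linarith
    set lam := (w - ρv) / (1 - ρv) with hlam
    have hlam0 : 0 < lam := div_pos (by linarith) h1ρ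
    have hw_eq : w = (1 - lam) * ρv + lam * 1 := by
      have h' : lam * (1 - ρv) = w - ρv := div_mul_cancel₀ _ h1ρ.ne'
      linarith
    have hconv := hFconv.2 hρmem (Set.right_mem_Icc.2 zero_le_one)
      (by rw [hlam]; rw [sub_nonneg, div_le_one h1ρ]; linarith : (0:ℝ) ≤ 1 - lam)
      hlam0.le (by ring : (1 - lam) + lam = 1)
    simp only [smul_eq_mul] at hconv
    calc F w = F ((1 - lam) * ρv + lam * 1) := by rw [← hw_eq]
      _ ≤ (1 - lam) * F ρv + lam * F 1 := hconv
      _ = lam * F 1 := by rw [hFρ]; ring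
      _ < 0 := mul_neg_of_pos_of_neg hlam0 hF1
  -- ODE facts
  have hyF : ∀ t, 0 ≤ t → HasDerivWithinAt y (F (y t)) (Set.Ici 0) t := by
    intro t ht
    have hmem := hymem t ht
    have habs' : |y t| ≤ 1 := abs_le.2 ⟨by linarith [hmem.1], hmem.2⟩
    have := hyderiv t ht
    rwa [add_comm, hF_eq (y t) habs'] at this
  have hycont : ContinuousOn y (Set.Ici 0) := fun t ht => (hyF t ht).continuousWithinAt
  have hyderivAt : ∀ t, 0 < t → HasDerivAt y (F (y t)) t := fun t ht =>
    (hyF t ht.le).hasDerivAt (Ici_mem_nhds ht)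
  -- invariance
  have hinv_le : y 0 ≤ ρv → ∀ t, 0 ≤ t → y t ≤ ρv := by
    intro h0 t ht
    apply stmt7_no_upcross y (fun x => F (y x)) ρv t ht
      (hycont.mono Set.Icc_subset_Ici_self)
      (fun x hx _ => hyderivAt x hx)
      (fun x hx _ hlt => (hFneg (y x) hlt (hymem x hx.le).2).le)
      h0
  have hinv_ge : ρv ≤ y 0 → ∀ t, 0 ≤ t → ρv ≤ y t := by
    intro h0 t ht
    have h := stmt7_no_upcross (fun s => -y s) (fun x => -F (y x)) (-ρv) t ht
      ((hycont.mono Set.Icc_subset_Ici_self).neg)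
      (fun x hx _ => (hyderivAt x hx).neg)
      (fun x hx _ hlt => by
        have h1 : y x < ρv := by
          have : -ρv < -y x := hlt
          linarith
        have h0x : (0:ℝ) ≤ y x := (hymem x hx.le).1
        show -F (y x) ≤ 0
        linarith [hFpos (y x) h0x h1])
      (by simpa using h0)
    simpa using h
  -- monotonicity
  have hmono_of_le : (∀ t, 0 ≤ t → y t ≤ ρv) → MonotoneOn y (Set.Ici 0) := by
    intro hle
    apply monotoneOn_of_deriv_nonneg (convex_Ici 0) hycont
    · intro x hx
      rw [interior_Ici] at hx
      exact (hyderivAt x hx).differentiableAt.differentiableWithinAt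
    · intro x hx
      rw [interior_Ici] at hx
      rw [(hyderivAt x hx).deriv]
      rcases lt_or_eq_of_le (hle x hx.le) with h | h
      · exact (hFpos (y x) (hymem x hx.le).1 h).le
      · rw [h, hFρ]
  have hanti_of_ge : (∀ t, 0 ≤ t → ρv ≤ y t) → AntitoneOn y (Set.Ici 0) := by
    intro hge
    apply antitoneOn_of_deriv_nonpos (convex_Ici 0) hycont
    · intro x hx
      rw [interior_Ici] at hx
      exact (hyderivAt x hx).differentiableAt.differentiableWithinAt
    · intro x hx
      rw [interior_Ici] at hx
      rw [(hyderivAt x hx).deriv]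
      rcases lt_or_eq_of_le (hge x hx.le) with h | h
      · exact (hFneg (y x) h (hymem x hx.le).2).le
      · rw [← h, hFρ]
  -- convergence, increasing case
  have hconv_le : (∀ t, 0 ≤ t → y t ≤ ρv) → Filter.Tendsto y Filter.atTop (nhds ρv) := by
    intro hle
    have hmono := hmono_of_le hle
    set Y : ℝ → ℝ := fun t => y (max t 0) with hYdef
    have hYmono : Monotone Y := fun s t hst =>
      hmono (Set.mem_Ici.2 (le_max_right s 0)) (Set.mem_Ici.2 (le_max_right t 0))
        (max_le_max hst le_rfl)
    have hYbdd : BddAbove (Set.range Y) :=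
      ⟨ρv, by rintro x ⟨t, rfl⟩; exact hle _ (le_max_right t 0)⟩
    have hYtend : Filter.Tendsto Y Filter.atTop (nhds (⨆ t, Y t)) :=
      tendsto_atTop_ciSup hYmono hYbdd
    set L := ⨆ t, Y t with hLdef
    have hyY : y =ᶠ[Filter.atTop] Y := by
      filter_upwards [Filter.eventually_ge_atTop (0:ℝ)] with t ht
      simp [hYdef, max_eq_left ht]
    have hytend : Filter.Tendsto y Filter.atTop (nhds L) := hYtend.congr' hyY.symm
    have hLle : L ≤ ρv := ciSup_le (fun t => hle _ (le_max_right t 0))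
    have hL0 : 0 ≤ L := by
      have h1 : Y 0 ≤ L := le_ciSup hYbdd 0
      have h2 : Y 0 = y 0 := by simp [hYdef]
      linarith [(hymem 0 le_rfl).1, h2 ▸ h1]
    rcases eq_or_lt_of_le hLle with hEq | hLlt
    · rwa [hEq] at hytend
    exfalso
    have hFL : 0 < F L := hFpos L hL0 hLlt
    have hmem1 : L ∈ Set.Icc (0:ℝ) 1 := ⟨hL0, le_trans hLle hρmem.2⟩
    have hFcontL : ContinuousWithinAt F (Set.Icc (0:ℝ) 1) L := hFcont' L hmem1
    have hyIcc : ∀ᶠ t in Filter.atTop, y t ∈ Set.Icc (0:ℝ) 1 := by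
      filter_upwards [Filter.eventually_ge_atTop (0:ℝ)] with t ht
      exact hymem t ht
    have htendF : Filter.Tendsto (fun t => F (y t)) Filter.atTop (nhds (F L)) :=
      hFcontL.tendsto.comp (tendsto_nhdsWithin_iff.2 ⟨hytend, hyIcc⟩)
    have hev : ∀ᶠ t in Filter.atTop, F L / 2 ≤ F (y t) := by
      have h' : ∀ᶠ x in nhds (F L), F L / 2 < x := eventually_gt_nhds (by linarith)
      filter_upwards [htendF.eventually h'] with t ht using ht.le
    rcases Filter.eventually_atTop.1 hev with ⟨t₂, ht₂⟩
    exact stmt7_escape y (fun t => F (y t)) ρv (F L / 2) (max t₂ 0) (by linarith)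
      (hycont.mono (Set.Ici_subset_Ici.2 (le_max_right _ _)))
      (fun x hx => hyderivAt x (lt_of_le_of_lt (le_max_right t₂ 0) hx))
      (fun t ht => ht₂ t (le_trans (le_max_left _ _) ht))
      (fun t ht => hle t (le_trans (le_max_right _ _) ht))
  -- convergence, decreasing case
  have hconv_ge : (∀ t, 0 ≤ t → ρv ≤ y t) → Filter.Tendsto y Filter.atTop (nhds ρv) := by
    intro hge
    have hanti := hanti_of_ge hge
    set Y : ℝ → ℝ := fun t => y (max t 0) with hYdef
    have hYanti : Antitone Y := fun s t hst =>
      hanti (Set.mem_Ici.2 (le_max_right s 0)) (Set.mem_Ici.2 (le_max_right t 0))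
        (max_le_max hst le_rfl)
    have hYbdd : BddBelow (Set.range Y) :=
      ⟨ρv, by rintro x ⟨t, rfl⟩; exact hge _ (le_max_right t 0)⟩
    have hYtend : Filter.Tendsto Y Filter.atTop (nhds (⨅ t, Y t)) :=
      tendsto_atTop_ciInf hYanti hYbdd
    set L := ⨅ t, Y t with hLdef
    have hyY : y =ᶠ[Filter.atTop] Y := by
      filter_upwards [Filter.eventually_ge_atTop (0:ℝ)] with t ht
      simp [hYdef, max_eq_left ht]
    have hytend : Filter.Tendsto y Filter.atTop (nhds L) := hYtend.congr' hyY.symm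
    have hLge : ρv ≤ L := le_ciInf (fun t => hge _ (le_max_right t 0))
    have hL1 : L ≤ 1 := by
      have h1 : L ≤ Y 0 := ciInf_le hYbdd 0
      have h2 : Y 0 = y 0 := by simp [hYdef]
      linarith [(hymem 0 le_rfl).2, h2 ▸ h1]
    rcases eq_or_lt_of_le hLge with hEq | hLgt
    · rwa [← hEq] at hytend
    exfalso
    have hFL : F L < 0 := hFneg L hLgt hL1
    have hmem1 : L ∈ Set.Icc (0:ℝ) 1 := ⟨le_trans hρmem.1 hLge, hL1⟩
    have hFcontL : ContinuousWithinAt F (Set.Icc (0:ℝ) 1) L := hFcont' L hmem1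
    have hyIcc : ∀ᶠ t in Filter.atTop, y t ∈ Set.Icc (0:ℝ) 1 := by
      filter_upwards [Filter.eventually_ge_atTop (0:ℝ)] with t ht
      exact hymem t ht
    have htendF : Filter.Tendsto (fun t => F (y t)) Filter.atTop (nhds (F L)) :=
      hFcontL.tendsto.comp (tendsto_nhdsWithin_iff.2 ⟨hytend, hyIcc⟩)
    have hev : ∀ᶠ t in Filter.atTop, F (y t) ≤ F L / 2 := by
      have h' : ∀ᶠ x in nhds (F L), x < F L / 2 := eventually_lt_nhds (by linarith)
      filter_upwards [htendF.eventually h'] with t ht using ht.le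
    rcases Filter.eventually_atTop.1 hev with ⟨t₂, ht₂⟩
    exact stmt7_escape (fun t => -y t) (fun t => -F (y t)) (-ρv) (-(F L) / 2) (max t₂ 0)
      (by linarith)
      ((hycont.mono (Set.Ici_subset_Ici.2 (le_max_right _ _))).neg)
      (fun x hx => (hyderivAt x (lt_of_le_of_lt (le_max_right t₂ 0) hx)).neg)
      (fun t ht => by
        show -(F L) / 2 ≤ -F (y t)
        linarith [ht₂ t (le_trans (le_max_left _ _) ht)])
      (fun t ht => by
        show -y t ≤ -ρv
        linarith [hge t (le_trans (le_max_right _ _) ht)])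
  -- conclusion
  refine ⟨?_, ?_, ?_⟩
  · intro hlt
    have hle : ∀ t, 0 ≤ t → y t ≤ ρv := hinv_le (by rw [hy0]; exact hlt.le)
    exact ⟨hmono_of_le hle, hconv_le hle⟩
  · intro hlt
    have hge : ∀ t, 0 ≤ t → ρv ≤ y t := hinv_ge (by rw [hy0]; exact hlt.le)
    exact ⟨hanti_of_ge hge, hconv_ge hge⟩
  · intro heq t ht
    exact le_antisymm (hinv_le (by rw [hy0, heq]) t ht) (hinv_ge (by rw [hy0, heq]) t ht)
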